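/- Let r ≥ 0, a > 0, b ∈ ℝ, γ ≥ 0, δ ∈ ℝ. Let P be a nonzero polynomial with real coefficients such that every complex root of P lies in the strip S(r) = {w ∈ ℂ : |Im w| ≤ r}, and define f : ℂ → ℂ by f(z) = exp(δz - γz²)·P(z). Let G(z) = e^{ib}·f(z + ia) + e^{-ib}·f(z - ia) (which equals 2·cos(aD + b)f(z)). If G is not identically zero, then every zero z of G satisfies (Im z)² ≤ max(r² - a², 0). -/

import Mathlib

open Complex Polynomial

private lemma pair_ineq (a y t r c : ℝ) (ha : 0 < a) (hy : 0 < y) (ht : t ^ 2 ≤ r ^ 2)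
    (hyr : r ^ 2 < y ^ 2 + a ^ 2) (hc : 0 ≤ c) :
    (c + (y - a - t) ^ 2) * (c + (y - a + t) ^ 2)
      < (c + (y + a - t) ^ 2) * (c + (y + a + t) ^ 2) := by
  have h1 : 0 < c + (y ^ 2 + a ^ 2 - t ^ 2) := by linarith
  nlinarith [mul_pos (mul_pos ha hy) h1]

private lemma multiset_prod_lt (F G : ℂ → ℝ) (s : Multiset ℂ) :
    s ≠ 0 → (∀ x ∈ s, 0 ≤ F x) → (∀ x ∈ s, F x < G x) →
    (s.map F).prod < (s.map G).prod := by
  induction s using Multiset.induction with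
  | empty => intro hs _ _; exact absurd rfl hs
  | cons a s ih =>
    intro _ h0 h
    simp only [Multiset.map_cons, Multiset.prod_cons]
    have hFa : 0 ≤ F a := h0 a (Multiset.mem_cons_self a s)
    have hGa : F a < G a := h a (Multiset.mem_cons_self a s)
    by_cases hs0 : s = 0
    · subst hs0; simpa using hGa
    · have h0' : ∀ x ∈ s, 0 ≤ F x := fun x hx => h0 x (Multiset.mem_cons_of_mem hx)
      have h' : ∀ x ∈ s, F x < G x := fun x hx => h x (Multiset.mem_cons_of_mem hx)
      have ihs := ih hs0 h0' h'
      have hGpos : 0 < (s.map G).prod := by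
        apply Multiset.prod_pos
        intro x hx
        obtain ⟨y, hy, rfl⟩ := Multiset.mem_map.mp hx
        exact lt_of_le_of_lt (h0' y hy) (h' y hy)
      calc F a * (s.map F).prod ≤ F a * (s.map G).prod :=
            mul_le_mul_of_nonneg_left ihs.le hFa
        _ < G a * (s.map G).prod := mul_lt_mul_of_pos_right hGa hGpos

theorem cos_operator_strip_decrease (r a b γ δ : ℝ) (hr : 0 ≤ r) (ha : 0 < a) (hγ : 0 ≤ γ)
    (P : Polynomial ℝ) (hP : P ≠ 0)
    (hroots : ∀ w : ℂ, Polynomial.aeval w P = 0 → |w.im| ≤ r)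
    (f G : ℂ → ℂ)
    (hf : ∀ z : ℂ, f z = Complex.exp ((δ : ℂ) * z - (γ : ℂ) * z ^ 2) * Polynomial.aeval z P)
    (hG : ∀ z : ℂ, G z = Complex.exp ((b : ℂ) * Complex.I) * f (z + a * Complex.I)
        + Complex.exp (-((b : ℂ) * Complex.I)) * f (z - a * Complex.I))
    (hG0 : ∃ z : ℂ, G z ≠ 0) :
    ∀ z : ℂ, G z = 0 → z.im ^ 2 ≤ max (r ^ 2 - a ^ 2) 0 := by
  classical
  intro z hz
  by_contra hcon
  push_neg at hcon
  have him2 : 0 < z.im ^ 2 := lt_of_le_of_lt (le_max_right _ _) hcon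
  have himne : z.im ≠ 0 := by
    intro h; rw [h] at him2; simp at him2
  have hra : r ^ 2 < z.im ^ 2 + a ^ 2 := by
    have := lt_of_le_of_lt (le_max_left (r ^ 2 - a ^ 2) 0) hcon
    linarith
  -- degenerate case: P constant and γ = 0
  by_cases hdeg : P.natDegree = 0 ∧ γ = 0
  · obtain ⟨hd0, hγ0⟩ := hdeg
    obtain ⟨c, hc⟩ := Polynomial.natDegree_eq_zero.mp hd0
    have hc0 : c ≠ 0 := by
      rintro rfl; rw [← hc] at hP; simp at hP
    have hGform : ∀ u : ℂ, G u = (c : ℂ) * Complex.exp ((δ : ℂ) * u) *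
        (Complex.exp ((b : ℂ) * I + (δ : ℂ) * ((a : ℂ) * I))
          + Complex.exp (-((b : ℂ) * I) - (δ : ℂ) * ((a : ℂ) * I))) := by
      intro u
      have e1 : (δ : ℂ) * (u + (a : ℂ) * I) - (γ : ℂ) * (u + (a : ℂ) * I) ^ 2
          = (δ : ℂ) * u + (δ : ℂ) * ((a : ℂ) * I) := by
        rw [hγ0]; push_cast; ring
      have e2 : (δ : ℂ) * (u - (a : ℂ) * I) - (γ : ℂ) * (u - (a : ℂ) * I) ^ 2
          = (δ : ℂ) * u - (δ : ℂ) * ((a : ℂ) * I) := by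
        rw [hγ0]; push_cast; ring
      rw [hG, hf, hf, e1, e2, ← hc]
      simp only [Polynomial.aeval_C]
      rw [Complex.exp_add, Complex.exp_sub, Complex.exp_add, Complex.exp_sub]
      have : algebraMap ℝ ℂ c = (c : ℂ) := rfl
      rw [this]
      ring
    obtain ⟨z₀, hz₀⟩ := hG0
    rw [hGform] at hz₀
    have hK : Complex.exp ((b : ℂ) * I + (δ : ℂ) * ((a : ℂ) * I))
        + Complex.exp (-((b : ℂ) * I) - (δ : ℂ) * ((a : ℂ) * I)) ≠ 0 := by
      intro h; apply hz₀; rw [h, mul_zero]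
    have : G z ≠ 0 := by
      rw [hGform]
      exact mul_ne_zero (mul_ne_zero (by exact_mod_cast hc0) (Complex.exp_ne_zero _)) hK
    exact this hz
  · -- main case
    have hnd : 0 < γ ∨ P.natDegree ≠ 0 := by
      rcases hγ.lt_or_eq with h | h
      · exact Or.inl h
      · right; intro hd; exact hdeg ⟨hd, h.symm⟩
    set Q : Polynomial ℂ := P.map (algebraMap ℝ ℂ) with hQdef
    have hQ0 : Q ≠ 0 := Polynomial.map_ne_zero hP
    have heval : ∀ u : ℂ, (Polynomial.aeval u P : ℂ) = Q.eval u := by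
      intro u
      rw [hQdef, Polynomial.eval_map, Polynomial.aeval_def]
    have hsplits : Q.Splits := IsAlgClosed.splits Q
    have hcard : Q.roots.card = P.natDegree := by
      rw [← hsplits.natDegree_eq_card_roots, hQdef, Polynomial.natDegree_map]
    have hconjroots : Q.roots.map (starRingEnd ℂ) = Q.roots := by
      have h1 : Q.map (starRingEnd ℂ) = Q := by
        rw [hQdef, Polynomial.map_map]
        congr 1
        ext x
        simp
      conv_rhs => rw [← h1]
      exact (hsplits.roots_map_of_injective (starRingEnd ℂ).injective).symm
    have hprod : ∀ u : ℂ, Q.eval u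
        = Q.leadingCoeff * (Q.roots.map (fun v => u - v)).prod := by
      intro u
      conv_lhs => rw [hsplits.eq_prod_roots]
      rw [Polynomial.eval_mul, Polynomial.eval_C, Polynomial.eval_multiset_prod,
        Multiset.map_map]
      simp [Function.comp]
    have hns : ∀ u : ℂ, Complex.normSq (f u)
        = Real.exp (2 * (((δ : ℂ) * u - (γ : ℂ) * u ^ 2).re)) *
          (Complex.normSq Q.leadingCoeff *
            (Q.roots.map (fun v => Complex.normSq (u - v))).prod) := by
      intro u
      rw [hf, Complex.normSq_mul, heval, hprod, Complex.normSq_mul]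
      have h1 : Complex.normSq (Complex.exp ((δ : ℂ) * u - (γ : ℂ) * u ^ 2))
          = Real.exp (2 * (((δ : ℂ) * u - (γ : ℂ) * u ^ 2).re)) := by
        rw [← Complex.sq_norm, Complex.norm_exp, two_mul, Real.exp_add, sq]
      have h2 : Complex.normSq (Q.roots.map (fun v => u - v)).prod
          = (Q.roots.map (fun v => Complex.normSq (u - v))).prod := by
        rw [map_multiset_prod Complex.normSq, Multiset.map_map]
        rfl
      rw [h1, h2]
    have hroot2 : ∀ v ∈ Q.roots, v.im ^ 2 ≤ r ^ 2 := by
      intro v hv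
      have h0 : Polynomial.aeval v P = 0 := by
        rw [heval]; exact Polynomial.isRoot_of_mem_roots hv
      have hb := hroots v h0
      calc v.im ^ 2 = |v.im| ^ 2 := (_root_.sq_abs _).symm
        _ ≤ r ^ 2 := pow_le_pow_left₀ (abs_nonneg _) hb 2
    -- key strict inequality
    have key : ∀ w : ℂ, 0 < w.im → r ^ 2 < w.im ^ 2 + a ^ 2 →
        Complex.normSq (f (w - (a : ℂ) * I)) < Complex.normSq (f (w + (a : ℂ) * I)) := by
      intro w hw hwr
      rw [hns, hns]
      have hlc : 0 < Complex.normSq Q.leadingCoeff :=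
        Complex.normSq_pos.mpr (Polynomial.leadingCoeff_ne_zero.mpr hQ0)
      have hre : (((δ : ℂ) * (w + (a : ℂ) * I) - (γ : ℂ) * (w + (a : ℂ) * I) ^ 2).re)
          = (((δ : ℂ) * (w - (a : ℂ) * I) - (γ : ℂ) * (w - (a : ℂ) * I) ^ 2).re)
            + 4 * a * γ * w.im := by
        simp only [pow_two, Complex.sub_re, Complex.mul_re, Complex.mul_im,
          Complex.add_re, Complex.add_im, Complex.sub_im,
          Complex.ofReal_re, Complex.ofReal_im, Complex.I_re, Complex.I_im]
        ring
      have hsqT : ∀ u : ℂ,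
          ((Q.roots.map (fun v => Complex.normSq (u - v))).prod) ^ 2
            = (Q.roots.map (fun v =>
                Complex.normSq (u - v) * Complex.normSq (u - (starRingEnd ℂ) v))).prod := by
        intro u
        rw [Multiset.prod_map_mul]
        have h3 : (Q.roots.map (fun v => Complex.normSq (u - (starRingEnd ℂ) v))).prod
            = (Q.roots.map (fun v => Complex.normSq (u - v))).prod := by
          conv_rhs => rw [← hconjroots]
          rw [Multiset.map_map]
          rfl
        rw [h3, sq]
      have hterm : ∀ v ∈ Q.roots,
          Complex.normSq (w - (a : ℂ) * I - v) * Complex.normSq (w - (a : ℂ) * I - (starRingEnd ℂ) v)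
            < Complex.normSq (w + (a : ℂ) * I - v) *
              Complex.normSq (w + (a : ℂ) * I - (starRingEnd ℂ) v) := by
        intro v hv
        have ht2 := hroot2 v hv
        have e1 : Complex.normSq (w + (a : ℂ) * I - v)
            = (w.re - v.re) ^ 2 + (w.im + a - v.im) ^ 2 := by
          simp [Complex.normSq_apply, Complex.add_re, Complex.add_im, Complex.sub_re,
            Complex.sub_im, Complex.mul_re, Complex.mul_im, Complex.ofReal_re,
            Complex.ofReal_im, Complex.I_re, Complex.I_im]
          ring
        have e2 : Complex.normSq (w + (a : ℂ) * I - (starRingEnd ℂ) v)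
            = (w.re - v.re) ^ 2 + (w.im + a + v.im) ^ 2 := by
          simp [Complex.normSq_apply, Complex.add_re, Complex.add_im, Complex.sub_re,
            Complex.sub_im, Complex.mul_re, Complex.mul_im, Complex.ofReal_re,
            Complex.ofReal_im, Complex.I_re, Complex.I_im, Complex.conj_re, Complex.conj_im]
          ring
        have e3 : Complex.normSq (w - (a : ℂ) * I - v)
            = (w.re - v.re) ^ 2 + (w.im - a - v.im) ^ 2 := by
          simp [Complex.normSq_apply, Complex.add_re, Complex.add_im, Complex.sub_re,
            Complex.sub_im, Complex.mul_re, Complex.mul_im, Complex.ofReal_re,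
            Complex.ofReal_im, Complex.I_re, Complex.I_im]
          ring
        have e4 : Complex.normSq (w - (a : ℂ) * I - (starRingEnd ℂ) v)
            = (w.re - v.re) ^ 2 + (w.im - a + v.im) ^ 2 := by
          simp [Complex.normSq_apply, Complex.add_re, Complex.add_im, Complex.sub_re,
            Complex.sub_im, Complex.mul_re, Complex.mul_im, Complex.ofReal_re,
            Complex.ofReal_im, Complex.I_re, Complex.I_im, Complex.conj_re, Complex.conj_im]
          ring
        rw [e1, e2, e3, e4]
        exact pair_ineq a w.im v.im r ((w.re - v.re) ^ 2) ha hw ht2 hwr (sq_nonneg _)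
      by_cases hd : P.natDegree = 0
      · have hγpos : 0 < γ := by
          rcases hnd with h | h
          · exact h
          · exact absurd hd h
        have hM : Q.roots = 0 := Multiset.card_eq_zero.mp (by rw [hcard, hd])
        rw [hM]
        simp only [Multiset.map_zero, Multiset.prod_zero]
        have hE : Real.exp (2 * (((δ : ℂ) * (w - (a : ℂ) * I) - (γ : ℂ) * (w - (a : ℂ) * I) ^ 2).re))
            < Real.exp (2 * (((δ : ℂ) * (w + (a : ℂ) * I) - (γ : ℂ) * (w + (a : ℂ) * I) ^ 2).re)) := by
          apply Real.exp_lt_exp.mpr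
          rw [hre]
          have : 0 < 4 * a * γ * w.im := by positivity
          linarith
        exact mul_lt_mul_of_pos_right hE (by simpa using hlc)
      · have hMne : Q.roots ≠ 0 := by
          intro h
          apply hd
          rw [← hcard, h, Multiset.card_zero]
        set Tm := (Q.roots.map (fun v => Complex.normSq (w - (a : ℂ) * I - v))).prod with hTm
        set Tp := (Q.roots.map (fun v => Complex.normSq (w + (a : ℂ) * I - v))).prod with hTp
        have hTm0 : 0 ≤ Tm := by
          apply Multiset.prod_nonneg
          intro x hx
          obtain ⟨v, hv, rfl⟩ := Multiset.mem_map.mp hx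
          exact Complex.normSq_nonneg _
        have hTp0 : 0 ≤ Tp := by
          apply Multiset.prod_nonneg
          intro x hx
          obtain ⟨v, hv, rfl⟩ := Multiset.mem_map.mp hx
          exact Complex.normSq_nonneg _
        have hTlt : Tm < Tp := by
          have h2 : Tm ^ 2 < Tp ^ 2 := by
            rw [hTm, hTp, hsqT, hsqT]
            apply multiset_prod_lt _ _ _ hMne
            · intro x hx
              exact mul_nonneg (Complex.normSq_nonneg _) (Complex.normSq_nonneg _)
            · exact hterm
          exact lt_of_pow_lt_pow_left₀ 2 hTp0 h2
        have hE : Real.exp (2 * (((δ : ℂ) * (w - (a : ℂ) * I) - (γ : ℂ) * (w - (a : ℂ) * I) ^ 2).re))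
            ≤ Real.exp (2 * (((δ : ℂ) * (w + (a : ℂ) * I) - (γ : ℂ) * (w + (a : ℂ) * I) ^ 2).re)) := by
          apply Real.exp_le_exp.mpr
          rw [hre]
          have : 0 ≤ 4 * a * γ * w.im := by positivity
          linarith
        calc Real.exp (2 * (((δ : ℂ) * (w - (a : ℂ) * I) - (γ : ℂ) * (w - (a : ℂ) * I) ^ 2).re))
              * (Complex.normSq Q.leadingCoeff * Tm)
            ≤ Real.exp (2 * (((δ : ℂ) * (w + (a : ℂ) * I) - (γ : ℂ) * (w + (a : ℂ) * I) ^ 2).re))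
              * (Complex.normSq Q.leadingCoeff * Tm) := by
              exact mul_le_mul_of_nonneg_right hE (mul_nonneg hlc.le hTm0)
          _ < Real.exp (2 * (((δ : ℂ) * (w + (a : ℂ) * I) - (γ : ℂ) * (w + (a : ℂ) * I) ^ 2).re))
              * (Complex.normSq Q.leadingCoeff * Tp) :=
              mul_lt_mul_of_pos_left (mul_lt_mul_of_pos_left hTlt hlc) (Real.exp_pos _)
    -- from G z = 0 deduce equality of normSq
    have hnseq : Complex.normSq (f (z + (a : ℂ) * I)) = Complex.normSq (f (z - (a : ℂ) * I)) := by
      rw [hG] at hz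
      have h1 : Complex.exp ((b : ℂ) * I) * f (z + (a : ℂ) * I)
          = -(Complex.exp (-((b : ℂ) * I)) * f (z - (a : ℂ) * I)) :=
        eq_neg_of_add_eq_zero_left hz
      have h2 := congrArg Complex.normSq h1
      rw [Complex.normSq_mul, Complex.normSq_neg, Complex.normSq_mul] at h2
      have hb1 : Complex.normSq (Complex.exp ((b : ℂ) * I)) = 1 := by
        rw [← Complex.sq_norm, Complex.norm_exp]; simp
      have hb2 : Complex.normSq (Complex.exp (-((b : ℂ) * I))) = 1 := by
        rw [← Complex.sq_norm, Complex.norm_exp]; simp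
      rw [hb1, hb2, one_mul, one_mul] at h2
      exact h2
    rcases himne.lt_or_gt with hneg | hpos
    · -- z.im < 0 : apply key to conj z
      have hconjf : ∀ u : ℂ, f ((starRingEnd ℂ) u) = (starRingEnd ℂ) (f u) := by
        intro u
        rw [hf, hf, map_mul, ← Complex.exp_conj, Polynomial.aeval_conj]
        congr 2
        simp [map_sub, map_mul, map_pow, Complex.conj_ofReal]
      have e1 : (starRingEnd ℂ) z + (a : ℂ) * I = (starRingEnd ℂ) (z - (a : ℂ) * I) := by
        simp [map_sub, map_mul, Complex.conj_ofReal, Complex.conj_I]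
      have e2 : (starRingEnd ℂ) z - (a : ℂ) * I = (starRingEnd ℂ) (z + (a : ℂ) * I) := by
        simp [map_add, map_mul, Complex.conj_ofReal, Complex.conj_I]
        ring
      have hk := key ((starRingEnd ℂ) z)
        (by simpa [Complex.conj_im] using neg_pos.mpr hneg)
        (by rw [Complex.conj_im, neg_sq]; exact hra)
      rw [e1, e2, hconjf, hconjf, Complex.normSq_conj, Complex.normSq_conj] at hk
      linarith [hnseq, hk]
    · have hk := key z hpos hra
      linarith [hnseq, hk]
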